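/- Let Δ be a finite d-dimensional simplicial complex with H_d(Δ; ℚ) = 0. Then the d-th Laplacian polytope P_Δ^{(d)}, i.e., the convex hull of the columns of L_d(Δ) = ∂_d^T ∂_d in ℝ^{f_d(Δ)}, is a simplex of dimension f_d(Δ) − 1 (its f_d(Δ) columns are affinely independent). -/

import Mathlib

open Matrix

variable (V : Type*) [Fintype V] [LinearOrder V]

/-- The boundary matrix `∂_d : C_d(Δ;ℚ) → C_{d-1}(Δ;ℚ)` of a simplicial complex `Δ`
(given as a finite set of finite faces on the linearly ordered vertex set `V`):
rows are indexed by the `(d-1)`-faces (cardinality `d`), columns by the `d`-faces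
(cardinality `d+1`); the entry for `σ = {j_1 < ⋯ < j_{d+1}}` and `τ = σ \ {j_k}`
is `(-1)^{k-1}`, i.e. `(-1)^{#{w ∈ σ : w < j_k}}`. -/
def bdryMat (Δ : Finset (Finset V)) (d : ℕ) :
    Matrix {τ // τ ∈ Δ.filter fun F => F.card = d}
      {σ // σ ∈ Δ.filter fun F => F.card = d + 1} ℚ :=
  Matrix.of fun τ σ =>
    ∑ v ∈ σ.1, if τ.1 = σ.1.erase v then (-1 : ℚ)^((σ.1.filter (· < v)).card) else 0

/-- for a finite `d`-dimensional simplicial complex `Δ` with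
`H_d(Δ;ℚ) = ker ∂_d = 0`, the columns of the top Laplacian `L_d(Δ) = ∂_dᵀ ∂_d`
(points of `ℝ^{f_d(Δ)}`, indexed by the `d`-faces) are affinely independent, i.e.
their convex hull, the Laplacian polytope `P_Δ^{(d)}`, is a simplex of dimension
`f_d(Δ) − 1`. -/
theorem stmt6 (Δ : Finset (Finset V)) (d : ℕ)
    (hclosed : ∀ F ∈ Δ, ∀ G ⊆ F, G ∈ Δ)
    (hdim : (∀ F ∈ Δ, F.card ≤ d + 1) ∧ ∃ F ∈ Δ, F.card = d + 1)
    (hH : LinearMap.ker (bdryMat V Δ d).mulVecLin = ⊥) :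
    AffineIndependent ℚ
      (fun σ : {σ // σ ∈ Δ.filter fun F => F.card = d + 1} =>
        ((bdryMat V Δ d)ᵀ * bdryMat V Δ d)ᵀ σ) := by
  classical
  set L := ((bdryMat V Δ d)ᵀ * bdryMat V Δ d) with hL
  have hker : ∀ x, L *ᵥ x = 0 → x = 0 := by
    intro x hx
    have hbd : (bdryMat V Δ d) *ᵥ x = 0 := by
      set y := (bdryMat V Δ d) *ᵥ x with hy
      have h1 : (bdryMat V Δ d)ᵀ *ᵥ y = 0 := by
        rw [hy, Matrix.mulVec_mulVec]; exact hx
      have h2 : y ⬝ᵥ y = 0 := by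
        have h3 : x ⬝ᵥ ((bdryMat V Δ d)ᵀ *ᵥ y) = 0 := by
          rw [h1, dotProduct_zero]
        rw [Matrix.dotProduct_mulVec, Matrix.vecMul_transpose, ← hy] at h3
        exact h3
      exact dotProduct_self_eq_zero.mp h2
    have := hH ▸ (LinearMap.mem_ker.mpr (show (bdryMat V Δ d).mulVecLin x = 0 from hbd))
    simpa using this
  rw [affineIndependent_iff]
  intro s w _ hsum e he
  set g : _ → ℚ :=
    fun σ => if σ ∈ s then w σ else 0 with hg
  have hLg : L *ᵥ g = 0 := by
    funext τ
    have := congrFun hsum τ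
    simp only [Finset.sum_apply, Pi.smul_apply, Pi.zero_apply, smul_eq_mul] at this
    simp only [Matrix.mulVec, dotProduct, hg, mul_ite, mul_zero, Pi.zero_apply]
    rw [Finset.sum_ite_mem, Finset.univ_inter]
    calc ∑ σ ∈ s, L τ σ * w σ = ∑ σ ∈ s, w σ * Lᵀ σ τ := by
          simp [Matrix.transpose_apply, mul_comm]
      _ = 0 := this
  have hg0 : g = 0 := hker g hLg
  have := congrFun hg0 e
  simpa [hg, he] using this
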